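/- For all real θ > 0, α > −1, every integer M ≥ 1 and all real x, y, the Christoffel–Darboux kernel of the 2M-point biorthogonal Hermite ensemble decomposes as K_{2M}^{Her(α)}(x,y) = K_M^{Lag((α−1)/2)}(x², y²) + x^θ y · K_M^{Lag((α+θ)/2)}(x², y²), where x^θ := sign(x)·|x|^θ. -/

import Mathlib

/-- Signed power: `x^θ := sign(x)·|x|^θ`. -/
noncomputable def sgnPow (x θ : ℝ) : ℝ := Real.sign x * |x| ^ θ

/-- The Christoffel–Darboux kernel of the `M`-point biorthogonal Laguerre ensemble. -/
noncomputable def KLag (α θ : ℝ) (M : ℕ) (x y : ℝ) : ℝ :=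
  θ * ∑ k ∈ Finset.range M, ∑ i ∈ Finset.range M, ∑ r ∈ Finset.Icc i (M - 1),
    (Real.Gamma ((M : ℝ) + ((i : ℝ) + α + 1) / θ) /
        (Real.Gamma (α + θ * (k : ℝ) + 1) * Real.Gamma (((i : ℝ) + α + 1) / θ))) *
      ((-1) ^ (i + k) /
        ((Nat.factorial k : ℝ) * (Nat.factorial (M - 1 - k) : ℝ) *
          (Nat.factorial i : ℝ) * (Nat.factorial (r - i) : ℝ))) *
      (x ^ (θ * (k : ℝ)) * y ^ r / (α + θ * (k : ℝ) + (i : ℝ) + 1))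

/-- The Konhauser biorthogonal Laguerre polynomial `Z_n^α(x;θ)`. -/
noncomputable def konhauserZ (α θ : ℝ) (n : ℕ) (x : ℝ) : ℝ :=
  ∑ j ∈ Finset.range (n + 1),
    (n.choose j : ℝ) * (-1) ^ j * x ^ j / Real.Gamma (θ * (j : ℝ) + α + 1)

/-- The Konhauser biorthogonal Laguerre polynomial `Y_n^α(x;θ)`. -/
noncomputable def konhauserY (α θ : ℝ) (n : ℕ) (x : ℝ) : ℝ :=
  (1 / (Nat.factorial n : ℝ)) * ∑ r ∈ Finset.range (n + 1),
    (x ^ r / (Nat.factorial r : ℝ)) *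
      ∑ i ∈ Finset.range (r + 1),
        (-1) ^ i * (r.choose i : ℝ) *
          (ascPochhammer ℝ n).eval (((i : ℝ) + α + 1) / θ)

/-- The biorthogonal Hermite polynomial `S_i^α(u;θ)`:
`S_{2n} (u) = Z_n^{(α-1)/2}(u²;θ)`, `S_{2n+1}(u) = u · Z_n^{(α+θ)/2}(u²;θ)`. -/
noncomputable def hermiteS (α θ : ℝ) (i : ℕ) (u : ℝ) : ℝ :=
  if Even i then konhauserZ ((α - 1) / 2) θ (i / 2) (u ^ 2)
  else u * konhauserZ ((α + θ) / 2) θ (i / 2) (u ^ 2)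

/-- The biorthogonal Hermite polynomial `T_i^α(u;θ)`:
`T_{2n} (u) = Y_n^{(α-1)/2}(u²;θ)`, `T_{2n+1}(u) = u · Y_n^{(α+θ)/2}(u²;θ)`. -/
noncomputable def hermiteT (α θ : ℝ) (i : ℕ) (u : ℝ) : ℝ :=
  if Even i then konhauserY ((α - 1) / 2) θ (i / 2) (u ^ 2)
  else u * konhauserY ((α + θ) / 2) θ (i / 2) (u ^ 2)

/-- The Christoffel–Darboux kernel of the `N`-point biorthogonal Hermite ensemble:
`K_N^{Her(α)}(x,y) = ∑_{i<N} S_i^α(x^θ;θ) T_i^α(y;θ)`, where `x^θ = sign(x)|x|^θ`. -/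
noncomputable def KHer (α θ : ℝ) (N : ℕ) (x y : ℝ) : ℝ :=
  ∑ i ∈ Finset.range N, hermiteS α θ i (sgnPow x θ) * hermiteT α θ i y

section Helpers
open Finset Polynomial

lemma pochEval_succ (n : ℕ) (c : ℝ) :
    (ascPochhammer ℝ (n+1)).eval c = (ascPochhammer ℝ n).eval c * (c + n) := by
  simp [ascPochhammer_succ_right]

lemma gamma_poch (c : ℝ) (hc : 0 < c) (n : ℕ) :
    Real.Gamma ((n : ℝ) + c) = Real.Gamma c * (ascPochhammer ℝ n).eval c := by
  induction n with
  | zero => simp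
  | succ n ih =>
    have h2 : c + (n:ℝ) ≠ 0 := by positivity
    have h1 : ((n+1 : ℕ) : ℝ) + c = (c + (n:ℝ)) + 1 := by push_cast; ring
    rw [h1, Real.Gamma_add_one h2, pochEval_succ, show c + (n:ℝ) = (n:ℝ) + c by ring, ih]
    ring

lemma fwdDiff_poly (r : ℕ) (p : ℝ[X]) (hp : p.degree < (r : ℕ)) :
    (fwdDiff (1:ℝ))^[r] (fun t : ℝ => p.eval t) = 0 := by
  induction r generalizing p with
  | zero =>
    have hp0 : p = 0 := by
      by_contra h
      exact absurd hp (not_lt.2 (Polynomial.zero_le_degree_iff.2 h))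
    subst hp0; funext t; simp
  | succ r ih =>
    have key : fwdDiff (1:ℝ) (fun t : ℝ => p.eval t)
        = fun t : ℝ => (p.comp (X + C 1) - p).eval t := by
      funext t; simp [fwdDiff, eval_comp]
    rw [Function.iterate_succ_apply, key]
    apply ih
    rcases eq_or_ne p 0 with h0 | h0
    · subst h0; rw [zero_comp, sub_zero, degree_zero]; exact_mod_cast WithBot.bot_lt_coe r
    rcases eq_or_ne (p.comp (X + C 1) - p) 0 with hq | hq
    · rw [hq, degree_zero]; exact_mod_cast WithBot.bot_lt_coe r
    have hXC : (X + C (1:ℝ)).natDegree = 1 := natDegree_X_add_C 1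
    have hnd : (p.comp (X + C 1)).natDegree = p.natDegree := by
      rw [natDegree_comp, hXC, mul_one]
    have hlc : p.leadingCoeff = (p.comp (X + C 1)).leadingCoeff := by
      rw [leadingCoeff_comp (by rw [hXC]; norm_num)]
      rw [(monic_X_add_C (1:ℝ)).leadingCoeff, one_pow, mul_one]
    have hc0 : p.comp (X + C 1) ≠ 0 := by
      rw [← leadingCoeff_ne_zero, ← hlc]
      exact leadingCoeff_ne_zero.2 h0
    have hdeg : p.degree = (p.comp (X + C 1)).degree := by
      rw [degree_eq_natDegree h0, degree_eq_natDegree hc0, hnd]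
    have hlt : (p - p.comp (X + C 1)).degree < p.degree :=
      degree_sub_lt hdeg h0 hlc
    have h2 : (p.comp (X + C 1) - p).degree < p.degree := by
      rwa [← degree_neg, neg_sub]
    have h3 : p.degree ≤ (r : ℕ) := by
      rw [degree_eq_natDegree h0] at hp ⊢
      exact_mod_cast Nat.lt_succ_iff.mp (by exact_mod_cast hp)
    exact lt_of_lt_of_le h2 h3

lemma alt_sum_poly (r : ℕ) (p : ℝ[X]) (hp : p.degree < (r : ℕ)) :
    ∑ i ∈ range (r+1), (-1:ℝ)^i * (r.choose i : ℝ) * p.eval (i:ℝ) = 0 := by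
  have h := fwdDiff_iter_eq_sum_shift (M := ℝ) (G := ℝ) (h := 1) (fun t => p.eval t) r 0
  rw [fwdDiff_poly r p hp] at h
  have h' : (0:ℝ) = ∑ k ∈ range (r+1), ((-1:ℝ)^(r-k) * (r.choose k : ℝ)) * p.eval (k:ℝ) := by
    rw [show ((0:ℝ→ℝ) 0) = (0:ℝ) from rfl] at h
    convert h using 2 with k
    rw [zsmul_eq_mul]
    push_cast
    norm_num [nsmul_eq_mul]
  have h2 : ∀ k ∈ range (r+1), ((-1:ℝ)^(r-k) * (r.choose k : ℝ)) * p.eval (k:ℝ)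
      = (-1:ℝ)^r * ((-1:ℝ)^k * (r.choose k : ℝ) * p.eval (k:ℝ)) := by
    intro k hk
    have hk' : k ≤ r := Nat.lt_succ_iff.mp (mem_range.mp hk)
    have : (-1:ℝ)^(r-k) = (-1)^r * (-1)^k := by
      rw [← pow_add, show r + k = (r-k) + 2*k by omega, pow_add, pow_mul]
      norm_num
    rw [this]; ring
  rw [Finset.sum_congr rfl h2, ← Finset.mul_sum] at h'
  have : (-1:ℝ)^r ≠ 0 := by norm_num
  field_simp at h'
  exact (mul_eq_zero.mp h'.symm).resolve_left this
lemma alt_sum_poch (β θ : ℝ) (hθ : θ ≠ 0) (n r : ℕ) (h : n < r) :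
    ∑ i ∈ range (r+1), (-1:ℝ)^i * (r.choose i : ℝ) *
      (ascPochhammer ℝ n).eval (((i:ℝ) + β + 1)/θ) = 0 := by
  have hq : (C θ⁻¹ * X + C ((β+1)/θ) : ℝ[X]).natDegree = 1 := by
    rw [natDegree_linear (by simpa using hθ)]
  set p : ℝ[X] := (ascPochhammer ℝ n).comp (C θ⁻¹ * X + C ((β+1)/θ)) with hp
  have hdeg : p.degree < (r : ℕ) := by
    calc p.degree ≤ (p.natDegree : WithBot ℕ) := degree_le_natDegree
    _ < (r : ℕ) := by
        rw [hp, natDegree_comp, hq, mul_one, ascPochhammer_natDegree]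
        exact_mod_cast h
  have := alt_sum_poly r p hdeg
  rw [← this]
  apply Finset.sum_congr rfl
  intro i _
  congr 1
  rw [hp, eval_comp]
  congr 1
  simp only [eval_add, eval_mul, eval_C, eval_X]
  field_simp
  ring

lemma sumT (c : ℝ) (j : ℕ) (hc : c + (j:ℝ) ≠ 0) (L : ℕ) (hL : 1 ≤ L) :
    ∑ m ∈ range L, (ascPochhammer ℝ (j+m)).eval c / (m.factorial : ℝ)
      = (ascPochhammer ℝ (j+L)).eval c / (((L-1).factorial : ℝ) * (c + j)) := by
  induction L with
  | zero => omega
  | succ L ih =>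
    rcases Nat.eq_zero_or_pos L with h0 | h0
    · subst h0
      simp only [range_one, sum_singleton, Nat.add_zero, Nat.factorial_zero,
        Nat.cast_one, div_one, Nat.add_sub_cancel, pochEval_succ]
      field_simp
      simp
    · rw [sum_range_succ, ih h0, show j + (L+1) = (j+L) + 1 from rfl, pochEval_succ]
      have hfac : (L.factorial : ℝ) = (L:ℝ) * ((L-1).factorial : ℝ) := by
        exact_mod_cast (Nat.mul_factorial_pred h0.ne').symm
      have h1 : ((L-1).factorial : ℝ) ≠ 0 := by positivity
      have h2 : (L.factorial : ℝ) ≠ 0 := by positivity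
      rw [Nat.add_sub_cancel]
      have hL' : ((L:ℝ)) ≠ 0 := Nat.cast_ne_zero.mpr h0.ne'
      field_simp
      rw [hfac]
      push_cast
      ring
lemma sum_n (c : ℝ) (hc : 0 < c) (j M : ℕ) (hj : j < M) :
    ∑ n ∈ range M, (n.choose j : ℝ) / (n.factorial : ℝ) * (ascPochhammer ℝ n).eval c
      = (ascPochhammer ℝ M).eval c /
          ((j.factorial : ℝ) * ((M-1-j).factorial : ℝ) * (c + j)) := by
  have hc' : c + (j:ℝ) ≠ 0 := by positivity
  rw [← Finset.sum_subset (show Finset.Ico j M ⊆ Finset.range M by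
      intro n hn; simp only [Finset.mem_Ico, Finset.mem_range] at *; omega)
    (by
      intro n hn hn'
      have : n < j := by simp only [Finset.mem_Ico, Finset.mem_range] at *; omega
      simp [Nat.choose_eq_zero_of_lt this])]
  rw [Finset.sum_Ico_eq_sum_range]
  have hterm : ∀ m, ((j+m).choose j : ℝ) / ((j+m).factorial : ℝ)
      * (ascPochhammer ℝ (j+m)).eval c
      = (1 / (j.factorial : ℝ)) * ((ascPochhammer ℝ (j+m)).eval c / (m.factorial : ℝ)) := by
    intro m
    have h1 : ((j+m).choose j : ℝ) * (j.factorial : ℝ) * (m.factorial : ℝ)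
        = ((j+m).factorial : ℝ) := by
      have h := Nat.choose_mul_factorial_mul_factorial (Nat.le_add_right j m)
      rw [Nat.add_sub_cancel_left] at h
      exact_mod_cast h
    have h2 : ((j+m).factorial : ℝ) ≠ 0 := by positivity
    have h3 : (j.factorial : ℝ) ≠ 0 := by positivity
    have h4 : (m.factorial : ℝ) ≠ 0 := by positivity
    field_simp
    linear_combination (ascPochhammer ℝ (j+m)).eval c * h1
  rw [Finset.sum_congr rfl (fun m _ => hterm m), ← Finset.mul_sum,
    sumT c j hc' (M - j) (by omega), show j + (M - j) = M by omega]
  rw [show M - j - 1 = M - 1 - j by omega]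
  rw [mul_comm (1 / (j.factorial:ℝ)), mul_one_div, div_div]
  congr 1
  ring
lemma tri_swap (M : ℕ) (hM : 1 ≤ M) (f : ℕ → ℕ → ℝ) :
    ∑ i ∈ range M, ∑ r ∈ Finset.Icc i (M-1), f i r
      = ∑ r ∈ range M, ∑ i ∈ range (r+1), f i r := by
  have h1 : ∀ i ∈ range M, ∑ r ∈ Finset.Icc i (M-1), f i r
      = ∑ r ∈ range M, if i ≤ r then f i r else 0 := by
    intro i hi
    rw [← Finset.sum_filter]
    apply Finset.sum_congr _ (fun _ _ => rfl)
    ext r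
    simp only [Finset.mem_Icc, Finset.mem_filter, Finset.mem_range]
    omega
  rw [Finset.sum_congr rfl h1, Finset.sum_comm]
  apply Finset.sum_congr rfl
  intro r hr
  rw [← Finset.sum_filter]
  apply Finset.sum_congr _ (fun _ _ => rfl)
  ext i
  simp only [Finset.mem_filter, Finset.mem_range]
  simp only [Finset.mem_range] at hr
  omega

lemma sum_split (f : ℕ → ℝ) (M : ℕ) :
    ∑ i ∈ range (2*M), f i = ∑ n ∈ range M, f (2*n) + ∑ n ∈ range M, f (2*n+1) := by
  induction M with
  | zero => simp
  | succ M ih =>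
    rw [show 2*(M+1) = 2*M + 1 + 1 by ring, sum_range_succ, sum_range_succ,
      ih, sum_range_succ, sum_range_succ]
    ring

lemma sgnPow_sq_pow (θ : ℝ) (hθ : 0 < θ) (x : ℝ) (j : ℕ) :
    ((sgnPow x θ)^2)^j = (x^2 : ℝ) ^ (θ * (j:ℝ)) := by
  rcases eq_or_ne x 0 with h | h
  · subst h
    simp only [sgnPow, Real.sign_zero, zero_mul, ne_eq, OfNat.ofNat_ne_zero,
      not_false_eq_true, zero_pow]
    cases j with
    | zero => simp
    | succ k =>
      rw [Real.zero_rpow (by positivity), zero_pow (by omega)]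
  · have hs : (Real.sign x)^2 = 1 := by
      rcases lt_trichotomy x 0 with hx | hx | hx
      · rw [Real.sign_of_neg hx]; norm_num
      · exact absurd hx h
      · rw [Real.sign_of_pos hx]; norm_num
    have habs : (0:ℝ) < |x| := abs_pos.mpr h
    have lhs : ((sgnPow x θ)^2)^j = |x| ^ (θ * (2*j : ℕ)) := by
      rw [sgnPow, mul_pow, hs, one_mul, ← pow_mul, ← Real.rpow_natCast (|x| ^ θ) (2*j),
        ← Real.rpow_mul (abs_nonneg x)]
    have rhs : (x^2 : ℝ) ^ (θ * (j:ℝ)) = |x| ^ ((2:ℕ) * (θ * (j:ℝ))) := by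
      rw [← sq_abs, ← Real.rpow_natCast |x| 2, ← Real.rpow_mul (abs_nonneg x)]
    rw [lhs, rhs]
    congr 1
    push_cast
    ring
lemma per_term (θ β : ℝ) (hθ : 0 < θ) (hβ : -1 < β) (M k r i : ℕ)
    (hk : k < M) (hi : i ≤ r) (u a : ℝ) (hu : u ^ k = a ^ (θ * (k:ℝ))) (w : ℝ) :
    ((-1:ℝ)^k * u^k / Real.Gamma (θ*(k:ℝ)+β+1)) *
      ((w^r/(r.factorial:ℝ)) * ((-1:ℝ)^i * (r.choose i:ℝ))) *
      ((ascPochhammer ℝ M).eval (((i:ℝ)+β+1)/θ) /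
        ((k.factorial:ℝ) * ((M-1-k).factorial:ℝ) * ((((i:ℝ)+β+1)/θ) + (k:ℝ))))
    = θ * ((Real.Gamma ((M:ℝ) + ((i:ℝ)+β+1)/θ) /
          (Real.Gamma (β + θ*(k:ℝ) + 1) * Real.Gamma (((i:ℝ)+β+1)/θ))) *
        ((-1:ℝ)^(i+k) / ((k.factorial:ℝ) * ((M-1-k).factorial:ℝ) *
          (i.factorial:ℝ) * ((r-i).factorial:ℝ))) *
        (a ^ (θ*(k:ℝ)) * w^r / (β + θ*(k:ℝ) + (i:ℝ) + 1))) := by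
  have hiR : (0:ℝ) ≤ (i:ℝ) := Nat.cast_nonneg i
  have hkR : (0:ℝ) ≤ (k:ℝ) := Nat.cast_nonneg k
  have hc : 0 < ((i:ℝ)+β+1)/θ := div_pos (by linarith) hθ
  set c : ℝ := ((i:ℝ)+β+1)/θ with hcdef
  have hck : 0 < c + (k:ℝ) := by linarith
  have hg1 : 0 < Real.Gamma (β + θ*(k:ℝ) + 1) :=
    Real.Gamma_pos_of_pos (by nlinarith)
  have hg2 : 0 < Real.Gamma c := Real.Gamma_pos_of_pos hc
  have hcri : (r.choose i : ℝ) * (i.factorial:ℝ) * ((r-i).factorial:ℝ)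
      = (r.factorial:ℝ) := by
    exact_mod_cast Nat.choose_mul_factorial_mul_factorial hi
  have hbt : β + θ*(k:ℝ) + (i:ℝ) + 1 = θ * (c + (k:ℝ)) := by
    rw [hcdef]; field_simp; ring
  have hgM : Real.Gamma ((M:ℝ) + c) = Real.Gamma c * (ascPochhammer ℝ M).eval c :=
    gamma_poch c hc M
  have hgat : Real.Gamma (θ*(k:ℝ)+β+1) = Real.Gamma (β + θ*(k:ℝ) + 1) := by
    rw [show θ*(k:ℝ)+β+1 = β + θ*(k:ℝ) + 1 by ring]
  clear_value c
  rw [hu, hgM, hbt, hgat, pow_add]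
  have h1 : (k.factorial:ℝ) ≠ 0 := by positivity
  have h2 : ((M-1-k).factorial:ℝ) ≠ 0 := by positivity
  have h3 : (i.factorial:ℝ) ≠ 0 := by positivity
  have h4 : ((r-i).factorial:ℝ) ≠ 0 := by positivity
  have h5 : (r.factorial:ℝ) ≠ 0 := by positivity
  rw [← hcri]
  have hch : (r.choose i : ℝ) ≠ 0 := Nat.cast_ne_zero.mpr (Nat.choose_pos hi).ne'
  field_simp

lemma lemB (θ β : ℝ) (hθ : 0 < θ) (hβ : -1 < β) (M : ℕ) (hM : 1 ≤ M)
    (u a w : ℝ) (hu : ∀ j : ℕ, u ^ j = a ^ (θ * (j:ℝ))) :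
    ∑ n ∈ range M, konhauserZ β θ n u * konhauserY β θ n w = KLag β θ M a w := by
  have claim1 : ∀ n ∈ range M, konhauserZ β θ n u * konhauserY β θ n w
      = ∑ j ∈ range M, ∑ r ∈ range M, ∑ i ∈ range (r+1),
          ((n.choose j : ℝ) * (-1)^j * u^j / Real.Gamma (θ*(j:ℝ)+β+1)) *
          ((1/(n.factorial:ℝ)) * ((w^r/(r.factorial:ℝ)) *
            ((-1:ℝ)^i * (r.choose i:ℝ) * (ascPochhammer ℝ n).eval (((i:ℝ)+β+1)/θ)))) := by
    intro n hn
    have hnM : n + 1 ≤ M := mem_range.mp hn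
    rw [konhauserZ, konhauserY]
    rw [Finset.sum_subset (Finset.range_subset_range.mpr hnM)
      (fun j _ hj => by
        have hj' : n < j := by simp only [mem_range] at hj ⊢; omega
        simp [Nat.choose_eq_zero_of_lt hj'])]
    rw [Finset.sum_subset (Finset.range_subset_range.mpr hnM)
      (fun r _ hr => by
        have hnr : n < r := by simp only [mem_range] at hr ⊢; omega
        rw [alt_sum_poch β θ hθ.ne' n r hnr]
        simp)]
    rw [Finset.mul_sum (a := 1/(n.factorial:ℝ))]
    rw [Finset.sum_mul_sum]
    apply Finset.sum_congr rfl; intro j _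
    apply Finset.sum_congr rfl; intro r _
    simp only [Finset.mul_sum]
  rw [Finset.sum_congr rfl claim1, Finset.sum_comm]
  rw [Finset.sum_congr rfl (fun j _ => Finset.sum_comm)]
  rw [Finset.sum_congr rfl (fun j _ => Finset.sum_congr rfl (fun r _ => Finset.sum_comm))]
  have step3 : ∀ j ∈ range M, ∀ r ∈ range M, ∀ i ∈ range (r+1),
      ∑ n ∈ range M,
        ((n.choose j : ℝ) * (-1)^j * u^j / Real.Gamma (θ*(j:ℝ)+β+1)) *
          ((1/(n.factorial:ℝ)) * ((w^r/(r.factorial:ℝ)) *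
            ((-1:ℝ)^i * (r.choose i:ℝ) * (ascPochhammer ℝ n).eval (((i:ℝ)+β+1)/θ))))
      = ((-1:ℝ)^j * u^j / Real.Gamma (θ*(j:ℝ)+β+1)) *
          ((w^r/(r.factorial:ℝ)) * ((-1:ℝ)^i * (r.choose i:ℝ))) *
          ((ascPochhammer ℝ M).eval (((i:ℝ)+β+1)/θ) /
            ((j.factorial:ℝ) * ((M-1-j).factorial:ℝ) * ((((i:ℝ)+β+1)/θ) + (j:ℝ)))) := by
    intro j hj r hr i hi
    have hc : 0 < ((i:ℝ)+β+1)/θ := by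
      have : (0:ℝ) ≤ (i:ℝ) := Nat.cast_nonneg i
      exact div_pos (by linarith) hθ
    have hrw : ∀ n ∈ range M,
        ((n.choose j : ℝ) * (-1)^j * u^j / Real.Gamma (θ*(j:ℝ)+β+1)) *
          ((1/(n.factorial:ℝ)) * ((w^r/(r.factorial:ℝ)) *
            ((-1:ℝ)^i * (r.choose i:ℝ) * (ascPochhammer ℝ n).eval (((i:ℝ)+β+1)/θ))))
        = (((-1:ℝ)^j * u^j / Real.Gamma (θ*(j:ℝ)+β+1)) *
            ((w^r/(r.factorial:ℝ)) * ((-1:ℝ)^i * (r.choose i:ℝ)))) *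
          ((n.choose j : ℝ) / (n.factorial:ℝ) *
            (ascPochhammer ℝ n).eval (((i:ℝ)+β+1)/θ)) := by
      intro n _
      ring
    rw [Finset.sum_congr rfl hrw, ← Finset.mul_sum,
      sum_n (((i:ℝ)+β+1)/θ) hc j M (mem_range.mp hj)]
  rw [Finset.sum_congr rfl (fun j hj => Finset.sum_congr rfl
    (fun r hr => Finset.sum_congr rfl (fun i hi => step3 j hj r hr i hi)))]
  rw [KLag]
  simp only [Finset.mul_sum]
  rw [Finset.sum_congr rfl (fun k _ => tri_swap M hM _)]
  apply Finset.sum_congr rfl; intro k hk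
  apply Finset.sum_congr rfl; intro r hr
  apply Finset.sum_congr rfl; intro i hi
  exact per_term θ β hθ hβ M k r i (mem_range.mp hk)
    (Nat.lt_succ_iff.mp (mem_range.mp hi)) u a (hu k) w

end Helpers

open Finset

/-- **Decomposition of the Hermite Christoffel–Darboux kernel into Laguerre
kernels:** `K_{2M}^{Her(α)}(x,y) = K_M^{Lag((α-1)/2)}(x²,y²) +
x^θ y · K_M^{Lag((α+θ)/2)}(x²,y²)`. -/
theorem KHer_eq_KLag_decomposition (θ α : ℝ) (hθ : 0 < θ) (hα : -1 < α)
    (M : ℕ) (hM : 1 ≤ M) (x y : ℝ) :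
    KHer α θ (2 * M) x y =
      KLag ((α - 1) / 2) θ M (x ^ 2) (y ^ 2) +
        sgnPow x θ * y * KLag ((α + θ) / 2) θ M (x ^ 2) (y ^ 2) := by
  have hβ1 : (-1:ℝ) < (α - 1)/2 := by linarith
  have hβ2 : (-1:ℝ) < (α + θ)/2 := by linarith
  have hu : ∀ j : ℕ, ((sgnPow x θ)^2) ^ j = (x^2 : ℝ) ^ (θ * (j:ℝ)) :=
    sgnPow_sq_pow θ hθ x
  have he : ∀ n, hermiteS α θ (2*n) (sgnPow x θ) * hermiteT α θ (2*n) y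
      = konhauserZ ((α-1)/2) θ n ((sgnPow x θ)^2) * konhauserY ((α-1)/2) θ n (y^2) := by
    intro n
    simp only [hermiteS, hermiteT]
    rw [if_pos (even_two_mul n), if_pos (even_two_mul n),
      Nat.mul_div_cancel_left n two_pos]
  have ho : ∀ n, hermiteS α θ (2*n+1) (sgnPow x θ) * hermiteT α θ (2*n+1) y
      = sgnPow x θ * y * (konhauserZ ((α+θ)/2) θ n ((sgnPow x θ)^2) *
          konhauserY ((α+θ)/2) θ n (y^2)) := by
    intro n
    have hne : ¬ Even (2*n+1) := by simp [Nat.even_add_one]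
    simp only [hermiteS, hermiteT]
    rw [if_neg hne, if_neg hne, show (2*n+1)/2 = n by omega]
    ring
  simp only [KHer]
  rw [sum_split, Finset.sum_congr rfl (fun n _ => he n),
    Finset.sum_congr rfl (fun n _ => ho n),
    lemB θ _ hθ hβ1 M hM _ _ _ hu, ← Finset.mul_sum,
    lemB θ _ hθ hβ2 M hM _ _ _ hu]
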